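/- Let $t > 0$, $c_1, c_2 \in \mathbb{R}$ with $c_2 \neq 0$, and $x \in \mathbb{R}$ with $c_1 + c_2 x \neq 0$. Define $\overline{X}^{x}_t := -\frac{c_1}{c_2} + \big(\frac{c_1}{c_2} + x\big)\exp\big(-\frac{c_2^2}{2}t + c_2 W_t\big)$ where $W_t \sim \mathcal{N}(0,t)$. Then for every bounded continuous function $\phi: \mathbb{R} \to \mathbb{R}$, the map $x \mapsto \mathbb{E}[\phi(\overline{X}^x_t)]$ is differentiable and $\frac{d}{dx}\,\mathbb{E}\big[\phi(\overline{X}^{x}_t)\big] = \mathbb{E}\Big[\phi(\overline{X}^{x}_t)\,\frac{1}{c_1 + c_2 x}\,\frac{W_t}{t}\Big]$. -/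

import Mathlib

open MeasureTheory ProbabilityTheory Real Filter Metric
open scoped NNReal ENNReal

lemma gauss_integral_eq (v : ℝ≥0) (hv : v ≠ 0) (f : ℝ → ℝ) :
    ∫ w, f w ∂(gaussianReal 0 v) = ∫ w, gaussianPDFReal 0 v w * f w := by
  rw [gaussianReal_of_var_ne_zero 0 hv]
  have h : gaussianPDF 0 v = fun u => ((fun u => (gaussianPDFReal 0 v u).toNNReal) u : ℝ≥0∞) := rfl
  rw [h, integral_withDensity_eq_integral_smul
    ((measurable_gaussianPDFReal 0 v).real_toNNReal) f]
  congr 1; ext u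
  simp [NNReal.smul_def, Real.coe_toNNReal _ (gaussianPDFReal_nonneg 0 v u)]

lemma gauss_pdf_formula (v : ℝ≥0) (w : ℝ) :
    gaussianPDFReal 0 v w = (Real.sqrt (2 * π * v))⁻¹ * Real.exp (-w ^ 2 / (2 * v)) := by
  simp [gaussianPDFReal]

lemma gauss_pdf_shift_deriv {t : ℝ} (ht : 0 < t) (v : ℝ≥0) (hvt : (v : ℝ) = t) (u r : ℝ) :
    HasDerivAt (fun r => gaussianPDFReal 0 v (u - r))
      ((u - r) / t * gaussianPDFReal 0 v (u - r)) r := by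
  have hg : HasDerivAt (fun r : ℝ => u - r) (-1) r := by
    simpa using (hasDerivAt_id r).const_sub u
  have h2 : HasDerivAt (fun r : ℝ => -(u - r) ^ 2 / (2 * t)) ((u - r) / t) r := by
    have := ((hg.pow 2).neg).div_const (2 * t)
    refine this.congr_deriv ?_
    field_simp
    ring
  have h3 := (h2.exp).const_mul (Real.sqrt (2 * π * (v : ℝ)))⁻¹
  have hpdef : (fun r => gaussianPDFReal 0 v (u - r))
      = fun r => (Real.sqrt (2 * π * (v : ℝ)))⁻¹ * Real.exp (-(u - r) ^ 2 / (2 * t)) := by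
    funext r; rw [gauss_pdf_formula, hvt]
  rw [hpdef]
  refine h3.congr_deriv ?_
  rw [gauss_pdf_formula, hvt]
  ring

/-- Automatic differentiation weight for log-normal dynamics: with
`X̄ˣ_t = -c₁/c₂ + (c₁/c₂ + x) exp(-c₂²t/2 + c₂ W_t)` and `W_t ∼ N(0,t)`,
for bounded continuous `φ`,
`d/dx E[φ(X̄ˣ_t)] = E[φ(X̄ˣ_t) (1/(c₁+c₂x)) (W_t/t)]`. -/
theorem lognormal_ibp_first_order
    (t c1 c2 x : ℝ) (ht : 0 < t) (hc2 : c2 ≠ 0) (hx : c1 + c2 * x ≠ 0)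
    (φ : ℝ → ℝ) (hφc : Continuous φ) (hφb : ∃ M, ∀ y, |φ y| ≤ M)
    (X : ℝ → ℝ → ℝ)
    (hX : ∀ y w, X y w = -(c1 / c2) + (c1 / c2 + y) * Real.exp (-(c2 ^ 2 / 2) * t + c2 * w)) :
    HasDerivAt (fun y => ∫ w, φ (X y w) ∂(gaussianReal 0 ⟨t, ht.le⟩))
      (∫ w, φ (X x w) * (1 / (c1 + c2 * x)) * (w / t) ∂(gaussianReal 0 ⟨t, ht.le⟩)) x := by
  obtain ⟨M, hM⟩ := hφb
  have hM0 : 0 ≤ M := le_trans (abs_nonneg _) (hM 0)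
  set v : ℝ≥0 := ⟨t, ht.le⟩ with hvdef
  have hvt : (v : ℝ) = t := rfl
  have hv0 : v ≠ 0 := by
    intro h
    exact ht.ne' (by rw [← hvt, h, NNReal.coe_zero])
  set p : ℝ → ℝ := gaussianPDFReal 0 v with hpdef
  have hpc : Continuous p := by
    have : p = fun w => (Real.sqrt (2 * π * v))⁻¹ * Real.exp (-w ^ 2 / (2 * v)) :=
      funext fun w => gauss_pdf_formula v w
    rw [this]; continuity
  have hpint : Integrable p := integrable_gaussianPDFReal 0 v
  have hpnonneg : ∀ w, 0 ≤ p w := gaussianPDFReal_nonneg 0 v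
  set a : ℝ := c1 / c2 with hadef
  have hca : ∀ y : ℝ, c2 * (a + y) = c1 + c2 * y := by
    intro y; rw [hadef, mul_add, mul_div_cancel₀ c1 hc2]
  have hax : a + x ≠ 0 := by
    intro h
    apply hx
    rw [← hca, h, mul_zero]
  set ψ : ℝ → ℝ := fun u => φ (X x u) with hψdef
  have hψc : Continuous ψ := by
    have : ψ = fun u => φ (-a + (a + x) * Real.exp (-(c2 ^ 2 / 2) * t + c2 * u)) :=
      funext fun u => by simp only [hψdef]; rw [hX]
    rw [this]
    exact hφc.comp (by continuity)
  have hψb : ∀ u, |ψ u| ≤ M := fun u => hM _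
  -- G and its derivative at 0
  set G : ℝ → ℝ := fun r => ∫ u, ψ u * p (u - r) with hGdef
  have hGderiv : HasDerivAt G (∫ u, ψ u * (u / t * p u)) 0 := by
    set C : ℝ := (Real.sqrt (2 * π * t))⁻¹ with hCdef
    have hC0 : 0 ≤ C := by positivity
    have hb4 : (0:ℝ) < (4 * t)⁻¹ := by positivity
    set bound : ℝ → ℝ := fun u =>
      M * ((|u| + 1) / t * (C * (Real.exp ((2 * t)⁻¹) * Real.exp (-(4 * t)⁻¹ * u ^ 2))))
      with hbdef
    have hmeas : ∀ r : ℝ, AEStronglyMeasurable (fun u => ψ u * p (u - r)) volume := by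
      intro r
      exact (hψc.mul (hpc.comp (continuous_id.sub continuous_const))).aestronglyMeasurable
    have hint0 : Integrable (fun u => ψ u * p (u - 0)) := by
      have h1 : (fun u => ψ u * p (u - 0)) = fun u => ψ u * p u := by
        funext u; rw [sub_zero]
      rw [h1]
      exact hpint.bdd_mul hψc.aestronglyMeasurable
        (Filter.Eventually.of_forall fun u => by rw [Real.norm_eq_abs]; exact hψb u)
    have hmeas' : AEStronglyMeasurable (fun u => ψ u * ((u - 0) / t * p (u - 0))) volume := by
      apply Continuous.aestronglyMeasurable
      exact hψc.mul (((continuous_id.sub continuous_const).div_const t).mul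
        (hpc.comp (continuous_id.sub continuous_const)))
    have hbound : ∀ᵐ u : ℝ, ∀ r ∈ ball (0:ℝ) 1,
        ‖ψ u * ((u - r) / t * p (u - r))‖ ≤ bound u := by
      refine Filter.Eventually.of_forall fun u => fun r hr => ?_
      have hr1 : |r| < 1 := by simpa [Real.dist_eq] using hr
      have hr2 : r ^ 2 ≤ 1 := by nlinarith [abs_nonneg r, sq_abs r]
      have hpb : p (u - r) ≤ C * (Real.exp ((2 * t)⁻¹) * Real.exp (-(4 * t)⁻¹ * u ^ 2)) := by
        rw [hpdef, gauss_pdf_formula, hvt, ← Real.exp_add, ← hCdef]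
        apply mul_le_mul_of_nonneg_left _ hC0
        apply Real.exp_le_exp.mpr
        have e1 : -(u - r) ^ 2 / (2 * t) = (-2 * (u - r) ^ 2) / (4 * t) := by
          field_simp; ring
        have e2 : (2 * t)⁻¹ + -(4 * t)⁻¹ * u ^ 2 = (2 - u ^ 2) / (4 * t) := by
          field_simp
          ring
        rw [e1, e2, div_le_div_iff₀ (by linarith) (by linarith)]
        nlinarith [sq_nonneg (u - 2 * r)]
      have hnorm : ‖ψ u * ((u - r) / t * p (u - r))‖
          = |ψ u| * (|u - r| / t * p (u - r)) := by
        rw [Real.norm_eq_abs, abs_mul, abs_mul, abs_div, abs_of_pos ht,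
          abs_of_nonneg (hpnonneg _)]
      rw [hnorm, hbdef]
      have h1 : |u - r| ≤ |u| + 1 := by
        calc |u - r| ≤ |u| + |r| := abs_sub u r
        _ ≤ |u| + 1 := by linarith
      have h2 : |ψ u| ≤ M := hψb u
      calc |ψ u| * (|u - r| / t * p (u - r))
          ≤ M * (|u - r| / t * p (u - r)) :=
            mul_le_mul_of_nonneg_right h2 (mul_nonneg (by positivity) (hpnonneg _))
        _ ≤ M * ((|u| + 1) / t * (C * (Real.exp ((2 * t)⁻¹) * Real.exp (-(4 * t)⁻¹ * u ^ 2)))) := by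
            apply mul_le_mul_of_nonneg_left _ hM0
            exact mul_le_mul (by gcongr) hpb (hpnonneg _) (by positivity)
    have hbint : Integrable bound := by
      have h1 : Integrable (fun u : ℝ => |u| * Real.exp (-(4 * t)⁻¹ * u ^ 2)) := by
        have := (integrable_mul_exp_neg_mul_sq hb4).abs
        refine this.congr (Filter.Eventually.of_forall fun u => ?_)
        simp [abs_mul, abs_of_pos (Real.exp_pos _)]
      have h2 : Integrable (fun u : ℝ => (|u| + 1) * Real.exp (-(4 * t)⁻¹ * u ^ 2)) := by
        have := h1.add (integrable_exp_neg_mul_sq hb4)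
        refine this.congr (Filter.Eventually.of_forall fun u => ?_)
        simp only [Pi.add_apply]
        ring
      have := h2.const_mul (M / t * (C * Real.exp ((2 * t)⁻¹)))
      refine this.congr (Filter.Eventually.of_forall fun u => ?_)
      rw [hbdef]
      field_simp
    have hdiff : ∀ᵐ u : ℝ, ∀ r ∈ ball (0:ℝ) 1,
        HasDerivAt (fun r => ψ u * p (u - r)) (ψ u * ((u - r) / t * p (u - r))) r := by
      refine Filter.Eventually.of_forall fun u => fun r _ => ?_
      exact (gauss_pdf_shift_deriv ht v hvt u r).const_mul (ψ u)
    have hmain := (hasDerivAt_integral_of_dominated_loc_of_deriv_le (ball_mem_nhds 0 one_pos)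
      (Filter.Eventually.of_forall hmeas) hint0 hmeas' hbound hbint hdiff).2
    have : (fun u => ψ u * ((u - 0) / t * p (u - 0))) = fun u => ψ u * (u / t * p u) := by
      funext u; rw [sub_zero]
    rw [this] at hmain
    exact hmain
  -- s and its derivative
  set s : ℝ → ℝ := fun y => c2⁻¹ * Real.log ((a + y) / (a + x)) with hsdef
  have hs0 : s x = 0 := by simp [hsdef, div_self hax]
  have hsderiv : HasDerivAt s (1 / (c1 + c2 * x)) x := by
    have h1 : HasDerivAt (fun y : ℝ => (a + y) / (a + x)) ((a + x)⁻¹) x := by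
      simpa using ((hasDerivAt_id x).const_add a).div_const (a + x)
    have h2 := (h1.log (by simp [div_self hax])).const_mul c2⁻¹
    refine h2.congr_deriv ?_
    rw [div_self hax, div_one, ← hca x]
    field_simp
  -- eventual equality
  have hEq : (fun y => ∫ w, φ (X y w) ∂(gaussianReal 0 v)) =ᶠ[nhds x] fun y => G (s y) := by
    have hcont : Continuous fun y : ℝ => (a + y) / (a + x) := by continuity
    have hpos : (0:ℝ) < (a + x) / (a + x) := by rw [div_self hax]; norm_num
    have hU : ∀ᶠ y in nhds x, 0 < (a + y) / (a + x) :=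
      (hcont.tendsto x).eventually (eventually_gt_nhds hpos)
    filter_upwards [hU] with y hy
    rw [gauss_integral_eq v hv0]
    have key : ∀ w, φ (X y w) = ψ (w + s y) := by
      intro w
      have h1 : c2 * s y = Real.log ((a + y) / (a + x)) := by
        simp only [hsdef]
        rw [← mul_assoc, mul_inv_cancel₀ hc2, one_mul]
      have hexp : (a + x) * Real.exp (-(c2 ^ 2 / 2) * t + c2 * (w + s y))
          = (a + y) * Real.exp (-(c2 ^ 2 / 2) * t + c2 * w) := by
        calc (a + x) * Real.exp (-(c2 ^ 2 / 2) * t + c2 * (w + s y))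
            = (a + x) * (Real.exp (-(c2 ^ 2 / 2) * t + c2 * w) * Real.exp (c2 * s y)) := by
              rw [show -(c2 ^ 2 / 2) * t + c2 * (w + s y)
                  = (-(c2 ^ 2 / 2) * t + c2 * w) + c2 * s y from by ring, Real.exp_add]
          _ = (a + x) * (Real.exp (-(c2 ^ 2 / 2) * t + c2 * w) * ((a + y) / (a + x))) := by
              rw [h1, Real.exp_log hy]
          _ = (a + y) * Real.exp (-(c2 ^ 2 / 2) * t + c2 * w) := by
              field_simp
      simp only [hψdef]
      rw [hX, hX, hexp]
    have h3 : (fun w => p w * φ (X y w))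
        = fun w => (fun u => ψ u * p (u - s y)) (w + s y) := by
      funext w
      simp only
      rw [key w, add_sub_cancel_right]
      ring
    rw [h3, integral_add_right_eq_self (fun u => ψ u * p (u - s y)) (s y)]
  -- assemble
  have hcomp : HasDerivAt (fun y => G (s y))
      ((∫ u, ψ u * (u / t * p u)) * (1 / (c1 + c2 * x))) x := by
    have := HasDerivAt.comp x (hs0 ▸ hGderiv) hsderiv
    exact this
  have hfinal : HasDerivAt (fun y => ∫ w, φ (X y w) ∂(gaussianReal 0 v))
      ((∫ u, ψ u * (u / t * p u)) * (1 / (c1 + c2 * x))) x :=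
    hcomp.congr_of_eventuallyEq hEq
  convert hfinal using 1
  rw [gauss_integral_eq v hv0]
  rw [show (fun w => p w * (φ (X x w) * (1 / (c1 + c2 * x)) * (w / t)))
      = fun w => (ψ w * (w / t * p w)) * (1 / (c1 + c2 * x)) from
    funext fun w => by rw [hψdef]; ring]
  rw [integral_mul_const]
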